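/- Let n ≥ 4, (λ, ξ) ∈ Λ = {(0,0), (1,0), (1,1), (2,0), (2,√3), (2,2)}, let ∇ be the bilinear map on 𝔤 satisfying the Koszul formula for ⟨·,·⟩_{λ,ξ}, let R(X,Y)Z := ∇_X(∇_YZ) − ∇_Y(∇_XZ) − ∇_{[X,Y]}Z, and let Ric(X) := Σ_{i=1}^{n} ε_i R(X, x'_i)x'_i. Then (𝔤, ⟨·,·⟩_{λ,ξ}) is an algebraic Ricci soliton: there exist c ∈ ℝ and a linear map D : ℝⁿ → ℝⁿ satisfying D[x, y] = [Dx, y] + [x, Dy] for all x, y ∈ ℝⁿ (a derivation of 𝔤) such that Ric = c·id + D. Moreover, if (λ, ξ) ≠ (1, 0), then (𝔤, ⟨·,·⟩_{λ,ξ}) is not Einstein: there is no c ∈ ℝ with Ric = c·id. -/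

import Mathlib

open Matrix

noncomputable section

/-- The Lie bracket of `𝔥₃ ⊕ ℝ^{n-3}` on `ℝⁿ`: `[x, y] = (x₁y₂ - x₂y₁) • eₙ`. -/
def bral (n : ℕ) (hn : 4 ≤ n) (x y : Fin n → ℝ) : Fin n → ℝ :=
  (x ⟨0, by omega⟩ * y ⟨1, by omega⟩ - x ⟨1, by omega⟩ * y ⟨0, by omega⟩) •
    (Pi.single (⟨n - 1, by omega⟩ : Fin n) (1 : ℝ) : Fin n → ℝ)

/-- The matrix `I_{n-1,1} = diag(1, …, 1, -1)`. -/
def Inm (n : ℕ) : Matrix (Fin n) (Fin n) ℝ :=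
  Matrix.diagonal fun i => if (i : ℕ) < n - 1 then 1 else -1

/-- `ε_i = 1` for `i ≤ n-1` (1-based), `ε_n = -1`. -/
def eps (n : ℕ) (i : Fin n) : ℝ := if (i : ℕ) < n - 1 then 1 else -1

/-- The canonical inner product of signature `(n-1,1)`: `⟨x,y⟩₀ = xᵀ I_{n-1,1} y`. -/
def ip0 (n : ℕ) (x y : Fin n → ℝ) : ℝ := ∑ i : Fin n, eps n i * x i * y i

/-- The indefinite orthogonal group `O(n-1,1)`. -/
def Oset (n : ℕ) : Set (Matrix (Fin n) (Fin n) ℝ) := {k | kᵀ * Inm n * k = Inm n}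

/-- The group `ℝ^× · Aut(𝔥₃ ⊕ ℝ^{n-3})`: invertible block lower triangular matrices
with diagonal blocks of sizes `(2, n-3, 1)`. -/
def Hset (n : ℕ) : Set (Matrix (Fin n) (Fin n) ℝ) :=
  {A | IsUnit A.det ∧ ∀ i j : Fin n,
    ((i : ℕ) < 2 ∧ 2 ≤ (j : ℕ)) ∨ ((i : ℕ) < n - 1 ∧ (j : ℕ) = n - 1) → A i j = 0}

/-- `H' = {hᵀ : h ∈ H}`. -/
def Hset' (n : ℕ) : Set (Matrix (Fin n) (Fin n) ℝ) := {A | Aᵀ ∈ Hset n}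

/-- `G_λ`: invertible matrices with last column `eₙ` and last row `(-λ, 0, …, 0, 1)`. -/
def Glam (n : ℕ) (hn : 4 ≤ n) (lam : ℝ) : Set (Matrix (Fin n) (Fin n) ℝ) :=
  {g | IsUnit g.det ∧
    (∀ i : Fin n, g i ⟨n - 1, by omega⟩ = if (i : ℕ) = n - 1 then 1 else 0) ∧
    (∀ j : Fin n, g ⟨n - 1, by omega⟩ j =
      if (j : ℕ) = n - 1 then 1 else if (j : ℕ) = 0 then -lam else 0)}

/-- The matrix `g_{λ,ξ}`: the identity except that the `(1, n-1)` entry is `ξ` and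
the `(1, n)` entry is `λ`. -/
def gmat (n : ℕ) (hn : 4 ≤ n) (lam xi : ℝ) : Matrix (Fin n) (Fin n) ℝ :=
  1 + Matrix.single ⟨0, by omega⟩ ⟨n - 2, by omega⟩ xi
    + Matrix.single ⟨0, by omega⟩ ⟨n - 1, by omega⟩ lam

/-- The inner product `⟨x,y⟩_{λ,ξ} = ⟨g_{λ,ξ}⁻¹x, g_{λ,ξ}⁻¹y⟩₀`. -/
def ipg (n : ℕ) (hn : 4 ≤ n) (lam xi : ℝ) (x y : Fin n → ℝ) : ℝ :=
  ip0 n ((gmat n hn lam xi)⁻¹.mulVec x) ((gmat n hn lam xi)⁻¹.mulVec y)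

/-- `x'_i = g_{λ,ξ} e_i`. -/
def xvec (n : ℕ) (hn : 4 ≤ n) (lam xi : ℝ) (i : Fin n) : Fin n → ℝ :=
  (gmat n hn lam xi).mulVec (Pi.single i 1)

/-- The parameter set `Λ = {(0,0), (1,0), (1,1), (2,0), (2,√3), (2,2)}`. -/
def Lam : Set (ℝ × ℝ) :=
  {(0, 0), (1, 0), (1, 1), (2, 0), (2, Real.sqrt 3), (2, 2)}

namespace S17

variable (n : ℕ) (hn : 4 ≤ n) (lam xi : ℝ)

def i0 : Fin n := ⟨0, by omega⟩
def i1 : Fin n := ⟨1, by omega⟩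
def i2 : Fin n := ⟨n - 2, by omega⟩
def i3 : Fin n := ⟨n - 1, by omega⟩

lemma n01 : i0 n hn ≠ i1 n hn := by simp only [i0, i1, ne_eq, Fin.mk.injEq]; omega
lemma n02 : i0 n hn ≠ i2 n hn := by simp only [i0, i2, ne_eq, Fin.mk.injEq]; omega
lemma n03 : i0 n hn ≠ i3 n hn := by simp only [i0, i3, ne_eq, Fin.mk.injEq]; omega
lemma n12 : i1 n hn ≠ i2 n hn := by simp only [i1, i2, ne_eq, Fin.mk.injEq]; omega
lemma n13 : i1 n hn ≠ i3 n hn := by simp only [i1, i3, ne_eq, Fin.mk.injEq]; omega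
lemma n23 : i2 n hn ≠ i3 n hn := by simp only [i2, i3, ne_eq, Fin.mk.injEq]; omega
lemma n10 : i1 n hn ≠ i0 n hn := (n01 n hn).symm
lemma n20 : i2 n hn ≠ i0 n hn := (n02 n hn).symm
lemma n30 : i3 n hn ≠ i0 n hn := (n03 n hn).symm
lemma n21 : i2 n hn ≠ i1 n hn := (n12 n hn).symm
lemma n31 : i3 n hn ≠ i1 n hn := (n13 n hn).symm
lemma n32 : i3 n hn ≠ i2 n hn := (n23 n hn).symm

lemma eps_i0 : eps n (i0 n hn) = 1 := by
  unfold eps; rw [if_pos]; simp only [i0]; omega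

lemma eps_i1 : eps n (i1 n hn) = 1 := by
  unfold eps; rw [if_pos]; simp only [i1]; omega

lemma eps_i2 : eps n (i2 n hn) = 1 := by
  unfold eps; rw [if_pos]; simp only [i2]; omega

lemma eps_i3 : eps n (i3 n hn) = -1 := by
  unfold eps; rw [if_neg]; simp only [i3]; omega

lemma eps_ne_zero (j : Fin n) : eps n j ≠ 0 := by
  unfold eps; split_ifs <;> norm_num

def quad (p0 p1 p2 p3 : ℝ) : Fin n → ℝ :=
  Pi.single (i0 n hn) p0 + Pi.single (i1 n hn) p1 + Pi.single (i2 n hn) p2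
    + Pi.single (i3 n hn) p3

lemma quad_apply (p0 p1 p2 p3 : ℝ) (i : Fin n) :
    quad n hn p0 p1 p2 p3 i =
      (if i = i0 n hn then p0 else 0) + (if i = i1 n hn then p1 else 0)
        + (if i = i2 n hn then p2 else 0) + (if i = i3 n hn then p3 else 0) := by
  simp [quad, Pi.single_apply]

lemma quad_app0 (p0 p1 p2 p3 : ℝ) : quad n hn p0 p1 p2 p3 (i0 n hn) = p0 := by
  rw [quad_apply, if_pos rfl, if_neg (n01 n hn), if_neg (n02 n hn), if_neg (n03 n hn)]; ring

lemma quad_app1 (p0 p1 p2 p3 : ℝ) : quad n hn p0 p1 p2 p3 (i1 n hn) = p1 := by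
  rw [quad_apply, if_neg (n10 n hn), if_pos rfl, if_neg (n12 n hn), if_neg (n13 n hn)]; ring

lemma quad_app2 (p0 p1 p2 p3 : ℝ) : quad n hn p0 p1 p2 p3 (i2 n hn) = p2 := by
  rw [quad_apply, if_neg (n20 n hn), if_neg (n21 n hn), if_pos rfl, if_neg (n23 n hn)]; ring

lemma quad_app3 (p0 p1 p2 p3 : ℝ) : quad n hn p0 p1 p2 p3 (i3 n hn) = p3 := by
  rw [quad_apply, if_neg (n30 n hn), if_neg (n31 n hn), if_neg (n32 n hn), if_pos rfl]; ring

lemma quad_add (p0 p1 p2 p3 q0 q1 q2 q3 : ℝ) :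
    quad n hn p0 p1 p2 p3 + quad n hn q0 q1 q2 q3
      = quad n hn (p0 + q0) (p1 + q1) (p2 + q2) (p3 + q3) := by
  funext i; simp only [Pi.add_apply, quad_apply]; split_ifs <;> ring

lemma quad_sub (p0 p1 p2 p3 q0 q1 q2 q3 : ℝ) :
    quad n hn p0 p1 p2 p3 - quad n hn q0 q1 q2 q3
      = quad n hn (p0 - q0) (p1 - q1) (p2 - q2) (p3 - q3) := by
  funext i; simp only [Pi.sub_apply, quad_apply]; split_ifs <;> ring

lemma quad_smul (c p0 p1 p2 p3 : ℝ) :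
    c • quad n hn p0 p1 p2 p3 = quad n hn (c * p0) (c * p1) (c * p2) (c * p3) := by
  funext i; simp only [Pi.smul_apply, smul_eq_mul, quad_apply]; split_ifs <;> ring

lemma quad_zero : quad n hn 0 0 0 0 = 0 := by
  funext i; simp [quad_apply]

lemma quad_congr {p0 p1 p2 p3 q0 q1 q2 q3 : ℝ} (h0 : p0 = q0) (h1 : p1 = q1)
    (h2 : p2 = q2) (h3 : p3 = q3) :
    quad n hn p0 p1 p2 p3 = quad n hn q0 q1 q2 q3 := by rw [h0, h1, h2, h3]


/-! ### ip0 lemmas -/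

lemma ip0_add_left (u v y : Fin n → ℝ) : ip0 n (u + v) y = ip0 n u y + ip0 n v y := by
  unfold ip0; rw [← Finset.sum_add_distrib]
  exact Finset.sum_congr rfl fun i _ => by simp [Pi.add_apply]; ring

lemma ip0_sub_left (u v y : Fin n → ℝ) : ip0 n (u - v) y = ip0 n u y - ip0 n v y := by
  unfold ip0; rw [← Finset.sum_sub_distrib]
  exact Finset.sum_congr rfl fun i _ => by simp [Pi.sub_apply]; ring

lemma ip0_single_left (j : Fin n) (c : ℝ) (y : Fin n → ℝ) :
    ip0 n (Pi.single j c) y = eps n j * c * y j := by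
  unfold ip0
  rw [Finset.sum_eq_single j]
  · rw [Pi.single_eq_same]
  · intro b _ hb; rw [Pi.single_eq_of_ne hb]; ring
  · intro h; exact absurd (Finset.mem_univ j) h

lemma ip0_single_right (j : Fin n) (c : ℝ) (x : Fin n → ℝ) :
    ip0 n x (Pi.single j c) = eps n j * x j * c := by
  unfold ip0
  rw [Finset.sum_eq_single j]
  · rw [Pi.single_eq_same]
  · intro b _ hb; rw [Pi.single_eq_of_ne hb]; ring
  · intro h; exact absurd (Finset.mem_univ j) h

lemma ip0_quad (p0 p1 p2 p3 : ℝ) (z : Fin n → ℝ) :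
    ip0 n (quad n hn p0 p1 p2 p3) z
      = p0 * z (i0 n hn) + p1 * z (i1 n hn) + p2 * z (i2 n hn) - p3 * z (i3 n hn) := by
  unfold quad
  rw [ip0_add_left, ip0_add_left, ip0_add_left, ip0_single_left, ip0_single_left,
    ip0_single_left, ip0_single_left, eps_i0, eps_i1, eps_i2, eps_i3]
  ring

/-! ### the linear functionals -/

def alf (x : Fin n → ℝ) : ℝ := x (i0 n hn) - xi * x (i2 n hn) - lam * x (i3 n hn)

def phf (x : Fin n → ℝ) : ℝ := -lam * alf n hn lam xi x - x (i3 n hn)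

lemma alf_quad (p0 p1 p2 p3 : ℝ) :
    alf n hn lam xi (quad n hn p0 p1 p2 p3) = p0 - xi * p2 - lam * p3 := by
  rw [alf, quad_app0, quad_app2, quad_app3]

/-! ### the inverse of `gmat` and the formula for `ipg` -/

lemma stdB_neg (i j : Fin n) (c : ℝ) :
    Matrix.single i j (-c) = -Matrix.single i j c := by
  ext a b
  simp only [Matrix.single, Matrix.of_apply, Matrix.neg_apply]
  split_ifs <;> ring

lemma gmat_eq : gmat n hn lam xi
    = 1 + Matrix.single (i0 n hn) (i2 n hn) xi
        + Matrix.single (i0 n hn) (i3 n hn) lam := rfl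

lemma gmat_inv : (gmat n hn lam xi)⁻¹ = gmat n hn (-lam) (-xi) := by
  apply Matrix.inv_eq_right_inv
  rw [gmat_eq n hn lam xi, gmat_eq n hn (-lam) (-xi), stdB_neg, stdB_neg]
  set P := Matrix.single (i0 n hn) (i2 n hn) xi with hP
  set Q := Matrix.single (i0 n hn) (i3 n hn) lam with hQ
  have hPP : P * P = 0 := Matrix.single_mul_single_of_ne _ _ _ _ (n20 n hn) _
  have hPQ : P * Q = 0 := Matrix.single_mul_single_of_ne _ _ _ _ (n20 n hn) _
  have hQP : Q * P = 0 := Matrix.single_mul_single_of_ne _ _ _ _ (n30 n hn) _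
  have hQQ : Q * Q = 0 := Matrix.single_mul_single_of_ne _ _ _ _ (n30 n hn) _
  have expand : (1 + P + Q) * (1 + -P + -Q)
      = 1 - P * P - P * Q - Q * P - Q * Q := by noncomm_ring
  rw [expand, hPP, hPQ, hQP, hQQ]
  simp

lemma gmat_mulVec (x : Fin n → ℝ) :
    (gmat n hn lam xi).mulVec x
      = fun i => if i = i0 n hn then x (i0 n hn) + xi * x (i2 n hn) + lam * x (i3 n hn)
          else x i := by
  rw [gmat_eq, Matrix.add_mulVec, Matrix.add_mulVec, Matrix.one_mulVec,
    Matrix.single_mulVec, Matrix.single_mulVec]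
  funext i
  by_cases h : i = i0 n hn <;>
    simp [Pi.add_apply, Function.update_apply, h]

lemma ginv_mulVec (x : Fin n → ℝ) :
    ((gmat n hn lam xi)⁻¹).mulVec x
      = fun i => if i = i0 n hn then alf n hn lam xi x else x i := by
  rw [gmat_inv, gmat_mulVec]
  funext i
  by_cases h : i = i0 n hn <;> simp [h, alf]
  ring

lemma ipg_eq (x y : Fin n → ℝ) :
    ipg n hn lam xi x y
      = ip0 n x y + alf n hn lam xi x * alf n hn lam xi y - x (i0 n hn) * y (i0 n hn) := by
  unfold ipg
  rw [ginv_mulVec, ginv_mulVec]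
  unfold ip0
  have key : ∀ i ∈ Finset.univ,
      eps n i * (if i = i0 n hn then alf n hn lam xi x else x i)
        * (if i = i0 n hn then alf n hn lam xi y else y i)
      = eps n i * x i * y i
        + (if i = i0 n hn then
            (alf n hn lam xi x * alf n hn lam xi y - x (i0 n hn) * y (i0 n hn)) else 0) := by
    intro i _
    by_cases h : i = i0 n hn
    · subst h; rw [if_pos rfl, if_pos rfl, if_pos rfl, eps_i0]; ring
    · rw [if_neg h, if_neg h, if_neg h]; ring
  rw [Finset.sum_congr rfl key, Finset.sum_add_distrib, Finset.sum_ite_eq' Finset.univ (i0 n hn)]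
  simp only [Finset.mem_univ, if_true]
  ring

lemma ipg_quad (p0 p1 p2 p3 : ℝ) (z : Fin n → ℝ) :
    ipg n hn lam xi (quad n hn p0 p1 p2 p3) z
      = p0 * z (i0 n hn) + p1 * z (i1 n hn) + p2 * z (i2 n hn) - p3 * z (i3 n hn)
        + (p0 - xi * p2 - lam * p3) * alf n hn lam xi z - p0 * z (i0 n hn) := by
  rw [ipg_eq, ip0_quad, alf_quad, quad_app0]

lemma ipg_sub_left (x y z : Fin n → ℝ) :
    ipg n hn lam xi (x - y) z = ipg n hn lam xi x z - ipg n hn lam xi y z := by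
  rw [ipg_eq, ipg_eq, ipg_eq, ip0_sub_left]
  have ha : alf n hn lam xi (x - y) = alf n hn lam xi x - alf n hn lam xi y := by
    simp [alf]; ring
  rw [ha, Pi.sub_apply]
  ring

/-! ### nondegeneracy -/

lemma alf_single (j : Fin n) (c : ℝ) :
    alf n hn lam xi (Pi.single j c)
      = (if i0 n hn = j then c else 0) - xi * (if i2 n hn = j then c else 0)
        - lam * (if i3 n hn = j then c else 0) := by
  simp [alf, Pi.single_apply]

lemma nondeg (v : Fin n → ℝ) (h : ∀ z, ipg n hn lam xi v z = 0) : v = 0 := by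
  have h0 := h (Pi.single (i0 n hn) 1)
  rw [ipg_eq, ip0_single_right, alf_single, if_pos rfl, if_neg (n20 n hn),
    if_neg (n30 n hn), Pi.single_eq_same, eps_i0] at h0
  have half : alf n hn lam xi v = 0 := by linarith [h0]
  have h2 := h (Pi.single (i2 n hn) 1)
  rw [ipg_eq, ip0_single_right, alf_single, if_neg (n02 n hn), if_pos rfl,
    if_neg (n32 n hn), Pi.single_eq_of_ne (n02 n hn), eps_i2, half] at h2
  have hv2 : v (i2 n hn) = 0 := by linarith [h2]
  have h3 := h (Pi.single (i3 n hn) 1)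
  rw [ipg_eq, ip0_single_right, alf_single, if_neg (n03 n hn), if_neg (n23 n hn),
    if_pos rfl, Pi.single_eq_of_ne (n03 n hn), eps_i3, half] at h3
  have hv3 : v (i3 n hn) = 0 := by linarith [h3]
  have hv0 : v (i0 n hn) = 0 := by
    have := half
    rw [alf, hv2, hv3] at this
    linarith [this]
  funext j
  by_cases hj0 : j = i0 n hn
  · rw [hj0]; exact hv0
  by_cases hj2 : j = i2 n hn
  · rw [hj2]; exact hv2
  by_cases hj3 : j = i3 n hn
  · rw [hj3]; exact hv3
  have hj := h (Pi.single j 1)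
  rw [ipg_eq, ip0_single_right, alf_single, if_neg (fun hx => hj0 hx.symm),
    if_neg (fun hx => hj2 hx.symm), if_neg (fun hx => hj3 hx.symm),
    Pi.single_eq_of_ne (fun hx => hj0 hx.symm), half] at hj
  have : eps n j * v j = 0 := by linarith [hj]
  have := mul_eq_zero.mp this
  rcases this with h'|h'
  · exact absurd h' (eps_ne_zero n j)
  · exact h'

/-! ### `bral` as a quad, the explicit connection, Koszul -/

lemma bral_quad (X Y : Fin n → ℝ) :
    bral n hn X Y
      = quad n hn 0 0 0 (X (i0 n hn) * Y (i1 n hn) - X (i1 n hn) * Y (i0 n hn)) := by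
  have hb : bral n hn X Y
      = (X (i0 n hn) * Y (i1 n hn) - X (i1 n hn) * Y (i0 n hn))
        • (Pi.single (i3 n hn) (1:ℝ) : Fin n → ℝ) := rfl
  rw [hb]
  funext i
  rw [Pi.smul_apply, smul_eq_mul, Pi.single_apply, quad_apply]
  split_ifs <;> ring

def nabE (X Y : Fin n → ℝ) : Fin n → ℝ :=
  quad n hn
    ((phf n hn lam xi X * Y (i1 n hn) + phf n hn lam xi Y * X (i1 n hn)) / 2
      * (1 + xi ^ 2 - lam ^ 2))
    (-((phf n hn lam xi X * Y (i0 n hn) + phf n hn lam xi Y * X (i0 n hn)) / 2))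
    ((phf n hn lam xi X * Y (i1 n hn) + phf n hn lam xi Y * X (i1 n hn)) * xi / 2)
    ((X (i0 n hn) * Y (i1 n hn) - X (i1 n hn) * Y (i0 n hn)) / 2
      - (phf n hn lam xi X * Y (i1 n hn) + phf n hn lam xi Y * X (i1 n hn)) * lam / 2)

lemma koszulE (X Y Z : Fin n → ℝ) :
    2 * ipg n hn lam xi (nabE n hn lam xi X Y) Z
      = ipg n hn lam xi (bral n hn X Y) Z - ipg n hn lam xi (bral n hn Y Z) X
        + ipg n hn lam xi (bral n hn Z X) Y := by
  rw [bral_quad, bral_quad, bral_quad]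
  unfold nabE
  rw [ipg_quad, ipg_quad, ipg_quad, ipg_quad]
  unfold phf alf
  ring

/-! ### `xvec` lemmas -/

lemma xvec_apply (j i : Fin n) :
    xvec n hn lam xi j i
      = (if i = j then 1 else 0) + (if i0 n hn = i ∧ i2 n hn = j then xi else 0)
        + (if i0 n hn = i ∧ i3 n hn = j then lam else 0) := by
  have : xvec n hn lam xi j = fun i => gmat n hn lam xi i j := by
    unfold xvec
    rw [Matrix.mulVec_single_one]
    funext i; rfl
  rw [this, gmat_eq]
  simp only [Matrix.add_apply, Matrix.one_apply, Matrix.single, Matrix.of_apply]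

lemma xvec_i0 : xvec n hn lam xi (i0 n hn) = quad n hn 1 0 0 0 := by
  funext i
  rw [xvec_apply, quad_apply,
    if_neg (show ¬(i0 n hn = i ∧ i2 n hn = i0 n hn) from fun h => (n20 n hn) h.2),
    if_neg (show ¬(i0 n hn = i ∧ i3 n hn = i0 n hn) from fun h => (n30 n hn) h.2)]
  by_cases h0 : i = i0 n hn
  · subst h0
    rw [if_pos (show i0 n hn = i0 n hn from rfl), if_neg (n01 n hn), if_neg (n02 n hn),
      if_neg (n03 n hn)]
    ring
  · rw [if_neg h0]
    simp only [ite_self, add_zero, zero_add]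

lemma xvec_i1 : xvec n hn lam xi (i1 n hn) = quad n hn 0 1 0 0 := by
  funext i
  rw [xvec_apply, quad_apply,
    if_neg (show ¬(i0 n hn = i ∧ i2 n hn = i1 n hn) from fun h => (n21 n hn) h.2),
    if_neg (show ¬(i0 n hn = i ∧ i3 n hn = i1 n hn) from fun h => (n31 n hn) h.2)]
  by_cases h1 : i = i1 n hn
  · subst h1
    rw [if_pos (show i1 n hn = i1 n hn from rfl), if_neg (n10 n hn), if_neg (n12 n hn),
      if_neg (n13 n hn)]
    ring
  · rw [if_neg h1]
    simp only [ite_self, add_zero, zero_add]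

lemma xvec_i2 : xvec n hn lam xi (i2 n hn) = quad n hn xi 0 1 0 := by
  funext i
  rw [xvec_apply, quad_apply,
    if_neg (show ¬(i0 n hn = i ∧ i3 n hn = i2 n hn) from fun h => (n32 n hn) h.2),
    if_congr (show (i0 n hn = i ∧ i2 n hn = i2 n hn) ↔ (i0 n hn = i) from
      and_iff_left rfl) rfl rfl]
  by_cases h0 : i = i0 n hn
  · subst h0
    rw [if_pos (show i0 n hn = i0 n hn from rfl), if_neg (n02 n hn), if_neg (n01 n hn),
      if_neg (n03 n hn)]
    ring
  · rw [if_neg (show ¬(i0 n hn = i) from fun h => h0 h.symm), if_neg h0]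
    simp only [ite_self, add_zero, zero_add]

lemma xvec_i3 : xvec n hn lam xi (i3 n hn) = quad n hn lam 0 0 1 := by
  funext i
  rw [xvec_apply, quad_apply,
    if_neg (show ¬(i0 n hn = i ∧ i2 n hn = i3 n hn) from fun h => (n23 n hn) h.2),
    if_congr (show (i0 n hn = i ∧ i3 n hn = i3 n hn) ↔ (i0 n hn = i) from
      and_iff_left rfl) rfl rfl]
  by_cases h0 : i = i0 n hn
  · subst h0
    rw [if_pos (show i0 n hn = i0 n hn from rfl), if_neg (n03 n hn), if_neg (n01 n hn),
      if_neg (n02 n hn)]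
    ring
  · rw [if_neg (show ¬(i0 n hn = i) from fun h => h0 h.symm), if_neg h0]
    simp only [ite_self, add_zero, zero_add]

lemma xvec_generic (j : Fin n) (h2 : j ≠ i2 n hn) (h3 : j ≠ i3 n hn) :
    xvec n hn lam xi j = Pi.single j 1 := by
  funext i
  rw [xvec_apply, Pi.single_apply,
    if_neg (show ¬(i0 n hn = i ∧ i2 n hn = j) from fun h => h2 h.2.symm),
    if_neg (show ¬(i0 n hn = i ∧ i3 n hn = j) from fun h => h3 h.2.symm)]
  ring

/-! ### vanishing of `nabE` -/

lemma nabE_zero_right (X u : Fin n → ℝ) (h0 : u (i0 n hn) = 0) (h1 : u (i1 n hn) = 0)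
    (h2 : u (i2 n hn) = 0) (h3 : u (i3 n hn) = 0) : nabE n hn lam xi X u = 0 := by
  have hp : phf n hn lam xi u = 0 := by simp [phf, alf, h0, h2, h3]
  unfold nabE
  rw [hp, h0, h1]
  rw [show ((phf n hn lam xi X * 0 + 0 * X (i1 n hn)) / 2 * (1 + xi ^ 2 - lam ^ 2)) = 0
    by ring]
  rw [show (-((phf n hn lam xi X * 0 + 0 * X (i0 n hn)) / 2)) = 0 by ring]
  rw [show ((phf n hn lam xi X * 0 + 0 * X (i1 n hn)) * xi / 2) = 0 by ring]
  rw [show ((X (i0 n hn) * 0 - X (i1 n hn) * 0) / 2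
      - (phf n hn lam xi X * 0 + 0 * X (i1 n hn)) * lam / 2) = 0 by ring]
  exact quad_zero n hn

lemma nabE_zero_left (u Y : Fin n → ℝ) (h0 : u (i0 n hn) = 0) (h1 : u (i1 n hn) = 0)
    (h2 : u (i2 n hn) = 0) (h3 : u (i3 n hn) = 0) : nabE n hn lam xi u Y = 0 := by
  have hp : phf n hn lam xi u = 0 := by simp [phf, alf, h0, h2, h3]
  unfold nabE
  rw [hp, h0, h1]
  rw [show ((0 * Y (i1 n hn) + phf n hn lam xi Y * 0) / 2 * (1 + xi ^ 2 - lam ^ 2)) = 0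
    by ring]
  rw [show (-((0 * Y (i0 n hn) + phf n hn lam xi Y * 0) / 2)) = 0 by ring]
  rw [show ((0 * Y (i1 n hn) + phf n hn lam xi Y * 0) * xi / 2) = 0 by ring]
  rw [show ((0 * Y (i1 n hn) - 0 * Y (i0 n hn)) / 2
      - (0 * Y (i1 n hn) + phf n hn lam xi Y * 0) * lam / 2) = 0 by ring]
  exact quad_zero n hn


/-! ### the Ricci formula and the derivation -/

def ricf (v : Fin n → ℝ) : Fin n → ℝ :=
  quad n hn
    ((1 - lam ^ 2) * (1 + xi ^ 2 - lam ^ 2) / 2 * v (i0 n hn))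
    ((1 - lam ^ 2) * (1 + xi ^ 2 - lam ^ 2) / 2 * v (i1 n hn))
    (xi * (1 - lam ^ 2) / 2 * v (i0 n hn))
    (-(lam * (1 - lam ^ 2 + xi ^ 2 / 2)) * v (i0 n hn)
      + lam * xi * (1 + xi ^ 2 - lam ^ 2) / 2 * v (i2 n hn)
      - (1 - lam ^ 2) * (1 + xi ^ 2 - lam ^ 2) / 2 * v (i3 n hn))

def Dmap : (Fin n → ℝ) →ₗ[ℝ] (Fin n → ℝ) where
  toFun v := ricf n hn lam xi v
    - (3 * ((1 - lam ^ 2) * (1 + xi ^ 2 - lam ^ 2) / 2)) • v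
  map_add' u v := by
    funext i
    simp only [ricf, quad_apply, Pi.add_apply, Pi.sub_apply, Pi.smul_apply, smul_eq_mul]
    split_ifs <;> ring
  map_smul' c v := by
    funext i
    simp only [ricf, quad_apply, Pi.add_apply, Pi.sub_apply, Pi.smul_apply, smul_eq_mul,
      RingHom.id_apply]
    split_ifs <;> ring

lemma Dmap_apply (v : Fin n → ℝ) :
    Dmap n hn lam xi v = ricf n hn lam xi v
      - (3 * ((1 - lam ^ 2) * (1 + xi ^ 2 - lam ^ 2) / 2)) • v := rfl

lemma ricf_quad (p0 p1 p2 p3 : ℝ) :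
    ricf n hn lam xi (quad n hn p0 p1 p2 p3)
      = quad n hn
          ((1 - lam ^ 2) * (1 + xi ^ 2 - lam ^ 2) / 2 * p0)
          ((1 - lam ^ 2) * (1 + xi ^ 2 - lam ^ 2) / 2 * p1)
          (xi * (1 - lam ^ 2) / 2 * p0)
          (-(lam * (1 - lam ^ 2 + xi ^ 2 / 2)) * p0
            + lam * xi * (1 + xi ^ 2 - lam ^ 2) / 2 * p2
            - (1 - lam ^ 2) * (1 + xi ^ 2 - lam ^ 2) / 2 * p3) := by
  unfold ricf
  rw [quad_app0, quad_app1, quad_app2, quad_app3]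

lemma Dmap_deriv (x y : Fin n → ℝ) :
    Dmap n hn lam xi (bral n hn x y)
      = bral n hn (Dmap n hn lam xi x) y + bral n hn x (Dmap n hn lam xi y) := by
  rw [Dmap_apply, Dmap_apply, Dmap_apply, bral_quad n hn x y, ricf_quad, quad_smul, quad_sub,
    bral_quad n hn _ y, bral_quad n hn x _]
  simp only [Pi.sub_apply, Pi.smul_apply, smul_eq_mul, ricf, quad_app0, quad_app1]
  rw [quad_add]
  exact quad_congr n hn (by ring) (by ring) (by ring) (by ring)

end S17

open S17 in
/-- for every `(λ,ξ) ∈ Λ`, `(𝔤, ⟨·,·⟩_{λ,ξ})` is an algebraic Ricci soliton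
(`Ric = c·id + D` for a derivation `D`), and for `(λ,ξ) ≠ (1,0)` it is not Einstein. -/
theorem stmt17 (n : ℕ) (hn : 4 ≤ n) (lam xi : ℝ) (hmem : (lam, xi) ∈ Lam)
    (nab : (Fin n → ℝ) →ₗ[ℝ] (Fin n → ℝ) →ₗ[ℝ] (Fin n → ℝ))
    (hK : ∀ X Y Z : Fin n → ℝ,
      2 * ipg n hn lam xi (nab X Y) Z
        = ipg n hn lam xi (bral n hn X Y) Z - ipg n hn lam xi (bral n hn Y Z) X
          + ipg n hn lam xi (bral n hn Z X) Y)
    (R : (Fin n → ℝ) → (Fin n → ℝ) → (Fin n → ℝ) → (Fin n → ℝ))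
    (hR : ∀ X Y Z : Fin n → ℝ,
      R X Y Z = nab X (nab Y Z) - nab Y (nab X Z) - nab (bral n hn X Y) Z)
    (Ric : (Fin n → ℝ) → (Fin n → ℝ))
    (hRic : ∀ X : Fin n → ℝ,
      Ric X = ∑ i : Fin n, eps n i • R X (xvec n hn lam xi i) (xvec n hn lam xi i)) :
    (∃ c : ℝ, ∃ D : (Fin n → ℝ) →ₗ[ℝ] (Fin n → ℝ),
      (∀ x y : Fin n → ℝ, D (bral n hn x y) = bral n hn (D x) y + bral n hn x (D y)) ∧
      ∀ v : Fin n → ℝ, Ric v = c • v + D v) ∧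
    ((lam, xi) ≠ (1, 0) → ¬∃ c : ℝ, ∀ v : Fin n → ℝ, Ric v = c • v) := by
  classical
  -- the connection is the explicit one
  have hnab : ∀ X Y : Fin n → ℝ, nab X Y = nabE n hn lam xi X Y := by
    intro X Y
    have hsub : ∀ Z, ipg n hn lam xi (nab X Y - nabE n hn lam xi X Y) Z = 0 := by
      intro Z
      rw [ipg_sub_left]
      have h1 := hK X Y Z
      have h2 := koszulE n hn lam xi X Y Z
      linarith
    exact sub_eq_zero.mp (nondeg n hn lam xi _ hsub)
  -- the Ricci operator is `ricf`
  have hric : ∀ v : Fin n → ℝ, Ric v = ricf n hn lam xi v := by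
    intro v
    rw [hRic]
    have hz0r : ∀ X : Fin n → ℝ, nabE n hn lam xi X 0 = 0 := fun X =>
      nabE_zero_right n hn lam xi X 0 rfl rfl rfl rfl
    have hvanish : ∀ j ∈ Finset.univ,
        j ∉ ({i0 n hn, i1 n hn, i2 n hn, i3 n hn} : Finset (Fin n)) →
        eps n j • R v (xvec n hn lam xi j) (xvec n hn lam xi j) = 0 := by
      intro j _ hj
      simp only [Finset.mem_insert, Finset.mem_singleton] at hj
      push_neg at hj
      obtain ⟨hj0, hj1, hj2, hj3⟩ := hj
      rw [hR, xvec_generic n hn lam xi j hj2 hj3]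
      simp only [hnab]
      have h0 : (Pi.single j 1 : Fin n → ℝ) (i0 n hn) = 0 :=
        Pi.single_eq_of_ne (fun h => hj0 h.symm) 1
      have h1 : (Pi.single j 1 : Fin n → ℝ) (i1 n hn) = 0 :=
        Pi.single_eq_of_ne (fun h => hj1 h.symm) 1
      have h2 : (Pi.single j 1 : Fin n → ℝ) (i2 n hn) = 0 :=
        Pi.single_eq_of_ne (fun h => hj2 h.symm) 1
      have h3 : (Pi.single j 1 : Fin n → ℝ) (i3 n hn) = 0 :=
        Pi.single_eq_of_ne (fun h => hj3 h.symm) 1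
      have hz1 : ∀ X : Fin n → ℝ, nabE n hn lam xi X (Pi.single j 1) = 0 := fun X =>
        nabE_zero_right n hn lam xi X _ h0 h1 h2 h3
      have hz2 : ∀ Y : Fin n → ℝ, nabE n hn lam xi (Pi.single j 1) Y = 0 := fun Y =>
        nabE_zero_left n hn lam xi _ Y h0 h1 h2 h3
      have hbz : bral n hn v (Pi.single j 1) = 0 := by
        rw [bral_quad, h0, h1, show v (i0 n hn) * 0 - v (i1 n hn) * 0 = 0 by ring,
          quad_zero]
      have hz0l : ∀ Y : Fin n → ℝ, nabE n hn lam xi 0 Y = 0 := fun Y =>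
        nabE_zero_left n hn lam xi 0 Y rfl rfl rfl rfl
      rw [hz1, hz1, hz0r, hz2, hbz, hz0l]
      simp
    rw [← Finset.sum_subset
      (Finset.subset_univ ({i0 n hn, i1 n hn, i2 n hn, i3 n hn} : Finset (Fin n))) hvanish]
    have m0 : i0 n hn ∉ ({i1 n hn, i2 n hn, i3 n hn} : Finset (Fin n)) := by
      simp [n01 n hn, n02 n hn, n03 n hn]
    have m1 : i1 n hn ∉ ({i2 n hn, i3 n hn} : Finset (Fin n)) := by
      simp [n12 n hn, n13 n hn]
    have m2 : i2 n hn ∉ ({i3 n hn} : Finset (Fin n)) := by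
      simp [n23 n hn]
    rw [Finset.sum_insert m0, Finset.sum_insert m1, Finset.sum_insert m2,
      Finset.sum_singleton]
    simp only [hR, hnab, xvec_i0, xvec_i1, xvec_i2, xvec_i3,
      eps_i0, eps_i1, eps_i2, eps_i3, bral_quad, nabE, phf, alf,
      quad_app0, quad_app1, quad_app2, quad_app3, quad_sub, quad_smul, quad_add]
    unfold ricf
    exact quad_congr n hn (by ring) (by ring) (by ring) (by ring)
  constructor
  · refine ⟨3 * ((1 - lam ^ 2) * (1 + xi ^ 2 - lam ^ 2) / 2), Dmap n hn lam xi,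
      fun x y => Dmap_deriv n hn lam xi x y, fun v => ?_⟩
    rw [hric v, Dmap_apply]
    abel
  · intro hne hEx
    obtain ⟨c, hc⟩ := hEx
    have h1 := congrFun ((hric (Pi.single (i1 n hn) 1)).symm.trans (hc _)) (i1 n hn)
    simp only [ricf, quad_app1, Pi.smul_apply, smul_eq_mul, Pi.single_eq_same] at h1
    have h3 := congrFun ((hric (Pi.single (i3 n hn) 1)).symm.trans (hc _)) (i3 n hn)
    simp only [ricf, quad_app3, Pi.smul_apply, smul_eq_mul, Pi.single_eq_same,
      Pi.single_eq_of_ne (n03 n hn), Pi.single_eq_of_ne (n23 n hn)] at h3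
    have hA := congrFun ((hric (Pi.single (i0 n hn) 1)).symm.trans (hc _)) (i2 n hn)
    simp only [ricf, quad_app2, Pi.smul_apply, smul_eq_mul, Pi.single_eq_same,
      Pi.single_eq_of_ne (n20 n hn)] at hA
    have hB := congrFun ((hric (Pi.single (i0 n hn) 1)).symm.trans (hc _)) (i3 n hn)
    simp only [ricf, quad_app3, Pi.smul_apply, smul_eq_mul, Pi.single_eq_same,
      Pi.single_eq_of_ne (n20 n hn), Pi.single_eq_of_ne (n30 n hn)] at hB
    simp only [Lam, Set.mem_insert_iff, Set.mem_singleton_iff, Prod.mk.injEq] at hmem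
    rcases hmem with ⟨rfl, rfl⟩ | ⟨rfl, rfl⟩ | ⟨rfl, rfl⟩ | ⟨rfl, rfl⟩ | ⟨rfl, rfl⟩ |
      ⟨rfl, rfl⟩
    · norm_num at h1 h3
      linarith
    · exact hne rfl
    · norm_num at hB
    · norm_num at h1 h3
      linarith
    · norm_num at hA
    · norm_num at h1 h3
      linarith
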